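/- Let p be an odd prime and let ε ∈ 𝔽_p be a non-square. Then Γ(p) is a normal subgroup of the Cartan non-split group Γ_ns^ε(p), and the quotient group Γ_ns^ε(p)/Γ(p) is cyclic of order p+1, i.e. isomorphic to ℤ/(p+1)ℤ. -/

import Mathlib

open Matrix

/-- The Cartan non-split ring mod `p`: the set of matrices `(a b; c d)` over `𝔽_p`
with `a = d` and `c = ε * b`. -/
def CnsSet (p : ℕ) (ε : ZMod p) : Set (Matrix (Fin 2) (Fin 2) (ZMod p)) :=
  {A | A 0 0 = A 1 1 ∧ A 1 0 = ε * A 0 1}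

lemma cns_one (p : ℕ) (ε : ZMod p) : (1 : Matrix (Fin 2) (Fin 2) (ZMod p)) ∈ CnsSet p ε := by
  simp [CnsSet, Matrix.one_apply]

lemma cns_mul {p : ℕ} {ε : ZMod p} {A B : Matrix (Fin 2) (Fin 2) (ZMod p)}
    (hA : A ∈ CnsSet p ε) (hB : B ∈ CnsSet p ε) : A * B ∈ CnsSet p ε := by
  obtain ⟨hA1, hA2⟩ := hA
  obtain ⟨hB1, hB2⟩ := hB
  constructor <;>
    · simp only [Matrix.mul_apply, Fin.sum_univ_two, hA1, hA2, hB1, hB2]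
      ring

lemma cns_adj {p : ℕ} {ε : ZMod p} {A : Matrix (Fin 2) (Fin 2) (ZMod p)}
    (hA : A ∈ CnsSet p ε) : A.adjugate ∈ CnsSet p ε := by
  obtain ⟨hA1, hA2⟩ := hA
  rw [Matrix.adjugate_fin_two]
  refine ⟨by simp [hA1], by simp [hA2]⟩

/-- Reduction modulo `p` on `SL₂`. -/
def redSL (p : ℕ) :
    Matrix.SpecialLinearGroup (Fin 2) ℤ →* Matrix.SpecialLinearGroup (Fin 2) (ZMod p) :=
  Matrix.SpecialLinearGroup.map (Int.castRingHom (ZMod p))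

/-- The determinant-one part of the Cartan non-split ring, as a subgroup of `SL₂(𝔽_p)`. -/
def CnsSL (p : ℕ) (ε : ZMod p) : Subgroup (Matrix.SpecialLinearGroup (Fin 2) (ZMod p)) where
  carrier := {A | (A : Matrix (Fin 2) (Fin 2) (ZMod p)) ∈ CnsSet p ε}
  one_mem' := by simpa using cns_one p ε
  mul_mem' := by
    intro A B hA hB
    simpa using cns_mul hA hB
  inv_mem' := by
    intro A hA
    simp only [Set.mem_setOf_eq, Matrix.SpecialLinearGroup.coe_inv] at hA ⊢
    exact cns_adj hA

/-- The Cartan non-split group `Γ_ns^ε(p)`: the subgroup of `SL₂(ℤ)` of matrices whose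
reduction modulo `p` lies in the Cartan non-split ring. -/
def GammaNs (p : ℕ) (ε : ZMod p) : Subgroup (Matrix.SpecialLinearGroup (Fin 2) ℤ) :=
  (CnsSL p ε).comap (redSL p)

instance gammaSubgroupOf_normal (p : ℕ) (ε : ZMod p) :
    ((CongruenceSubgroup.Gamma p).subgroupOf (GammaNs p ε)).Normal :=
  (CongruenceSubgroup.Gamma_normal p).subgroupOf _
section Aux

variable {p : ℕ} {ε : ZMod p}

lemma cns_zero : (0 : Matrix (Fin 2) (Fin 2) (ZMod p)) ∈ CnsSet p ε := ⟨rfl, by simp⟩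

lemma cns_add {A B : Matrix (Fin 2) (Fin 2) (ZMod p)}
    (hA : A ∈ CnsSet p ε) (hB : B ∈ CnsSet p ε) : A + B ∈ CnsSet p ε :=
  ⟨by simp [Matrix.add_apply, hA.1, hB.1], by simp [Matrix.add_apply, hA.2, hB.2, mul_add]⟩

lemma cns_neg {A : Matrix (Fin 2) (Fin 2) (ZMod p)}
    (hA : A ∈ CnsSet p ε) : -A ∈ CnsSet p ε :=
  ⟨by simp [hA.1], by simp [hA.2]⟩

/-- The Cartan non-split ring as a subring of the matrix ring. -/
def CnsSubring (p : ℕ) (ε : ZMod p) : Subring (Matrix (Fin 2) (Fin 2) (ZMod p)) where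
  carrier := CnsSet p ε
  one_mem' := cns_one p ε
  mul_mem' := cns_mul
  zero_mem' := cns_zero
  add_mem' := cns_add
  neg_mem' := cns_neg

lemma cns_eta {A : Matrix (Fin 2) (Fin 2) (ZMod p)} (hA : A ∈ CnsSet p ε) :
    A = !![A 0 0, A 0 1; ε * A 0 1, A 0 0] := by
  have h1 := hA.1
  have h2 := hA.2
  ext i j
  fin_cases i <;> fin_cases j <;> simp [h2, ← h1]

lemma cns_det {A : Matrix (Fin 2) (Fin 2) (ZMod p)} (hA : A ∈ CnsSet p ε) :
    A.det = A 0 0 ^ 2 - ε * A 0 1 ^ 2 := by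
  rw [Matrix.det_fin_two, ← hA.1, hA.2]
  ring

instance cnsCommRing (p : ℕ) (ε : ZMod p) : CommRing (CnsSubring p ε) :=
  { (inferInstance : Ring (CnsSubring p ε)) with
    mul_comm := by
      rintro ⟨A, hA⟩ ⟨B, hB⟩
      apply Subtype.ext
      show A * B = B * A
      rw [cns_eta hA, cns_eta hB]
      ext i j
      fin_cases i <;> fin_cases j <;>
        · simp [Matrix.mul_apply, Fin.sum_univ_two]
          ring }

/-- The scalar embedding of `𝔽_p` into the Cartan subring. -/
def cnsScalar (p : ℕ) (ε : ZMod p) : ZMod p →+* CnsSubring p ε :=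
  (Matrix.scalar (Fin 2)).codRestrict (CnsSubring p ε)
    (fun c => ⟨by simp [Matrix.scalar_apply], by simp [Matrix.scalar_apply]⟩)

@[simp] lemma cnsScalar_coe (c : ZMod p) :
    (cnsScalar p ε c : Matrix (Fin 2) (Fin 2) (ZMod p)) = Matrix.scalar (Fin 2) c := rfl

lemma cnsScalar_injective : Function.Injective (cnsScalar p ε) := by
  intro c d h
  have := congrArg (fun y : CnsSubring p ε => (y : Matrix (Fin 2) (Fin 2) (ZMod p)) 0 0) h
  simpa [Matrix.scalar_apply] using this

/-- The element `η = (0 1; ε 0)` of the Cartan subring. -/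
def cnsEta (p : ℕ) (ε : ZMod p) : CnsSubring p ε :=
  ⟨!![0, 1; ε, 0], by constructor <;> simp⟩

lemma cnsEta_sq : cnsEta p ε * cnsEta p ε = cnsScalar p ε ε := by
  apply Subtype.ext
  show (!![0, 1; ε, 0] : Matrix (Fin 2) (Fin 2) (ZMod p)) * !![0, 1; ε, 0] = _
  rw [cnsScalar_coe, Matrix.scalar_apply]
  ext i j
  fin_cases i <;> fin_cases j <;> simp [Matrix.mul_apply, Fin.sum_univ_two, Matrix.diagonal]

lemma cns_decomp (x : CnsSubring p ε) :
    x = cnsScalar p ε ((x : Matrix (Fin 2) (Fin 2) (ZMod p)) 0 0)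
        + cnsScalar p ε ((x : Matrix (Fin 2) (Fin 2) (ZMod p)) 0 1) * cnsEta p ε := by
  apply Subtype.ext
  have h1 := x.2.1
  have h2 := x.2.2
  show (x : Matrix (Fin 2) (Fin 2) (ZMod p)) = _
  push_cast
  ext i j
  fin_cases i <;> fin_cases j <;>
    simp [cnsEta, Matrix.scalar_apply, Matrix.mul_apply, Matrix.add_apply,
      Fin.sum_univ_two, Matrix.diagonal, h2, ← h1, mul_comm]

end Aux
section Aux2

variable {p : ℕ} {ε : ZMod p}

lemma cns_nondeg [Fact p.Prime] (hε : ¬ IsSquare ε) {a b : ZMod p}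
    (h : a ^ 2 - ε * b ^ 2 = 0) : a = 0 ∧ b = 0 := by
  by_cases hb : b = 0
  · subst hb
    refine ⟨?_, rfl⟩
    have : a ^ 2 = 0 := by linear_combination h
    exact pow_eq_zero_iff (n := 2) (by norm_num) |>.mp this
  · exfalso
    apply hε
    refine ⟨a * b⁻¹, ?_⟩
    have h' : a ^ 2 = ε * b ^ 2 := by linear_combination h
    field_simp
    linear_combination -h'

lemma cns_ne_zero_of_matrix {A : Matrix (Fin 2) (Fin 2) (ZMod p)} (hA : A ∈ CnsSet p ε)
    (h0 : A 0 0 = 0) (h1 : A 0 1 = 0) : A = 0 := by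
  rw [cns_eta hA, h0, h1]
  ext i j
  fin_cases i <;> fin_cases j <;> simp

lemma cns_noZeroDivisors [Fact p.Prime] (hε : ¬ IsSquare ε) :
    NoZeroDivisors (CnsSubring p ε) := by
  constructor
  rintro ⟨A, hA⟩ ⟨B, hB⟩ h
  by_cases hA0 : (⟨A, hA⟩ : CnsSubring p ε) = 0
  · exact Or.inl hA0
  · right
    have hdet : A.det ≠ 0 := by
      intro hd
      rw [cns_det hA] at hd
      obtain ⟨h0, h1⟩ := cns_nondeg hε hd
      exact hA0 (Subtype.ext (cns_ne_zero_of_matrix hA h0 h1))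
    have hAB : A * B = 0 := congrArg Subtype.val h
    apply Subtype.ext
    show B = 0
    have := congrArg (fun M => A⁻¹ * M) hAB
    simpa [← Matrix.mul_assoc, Matrix.nonsing_inv_mul A (isUnit_iff_ne_zero.mpr hdet)]
      using this

lemma cnsEta_pow_card [Fact p.Prime] (hp : Odd p) (heps : ε ^ (p / 2) = -1) :
    (cnsEta p ε) ^ p = - cnsEta p ε := by
  obtain ⟨k, hk⟩ := hp
  have hk2 : p / 2 = k := by omega
  have : ((cnsEta p ε) ^ 2) ^ k * cnsEta p ε = (cnsEta p ε) ^ p := by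
    rw [← pow_mul, ← pow_succ, ← hk]
  rw [← this, pow_two, cnsEta_sq, ← map_pow, ← hk2, heps, _root_.map_neg, _root_.map_one,
    neg_one_mul]

lemma cns_pow_card_add_one [Fact p.Prime] (hp : Odd p) (heps : ε ^ (p / 2) = -1)
    (x : CnsSubring p ε) :
    x ^ (p + 1) = cnsScalar p ε ((x : Matrix (Fin 2) (Fin 2) (ZMod p)).det) := by
  set a := (x : Matrix (Fin 2) (Fin 2) (ZMod p)) 0 0 with ha
  set b := (x : Matrix (Fin 2) (Fin 2) (ZMod p)) 0 1 with hb
  have hdec : x = cnsScalar p ε a + cnsScalar p ε b * cnsEta p ε := cns_decomp x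
  have hfrob : x ^ p = cnsScalar p ε a - cnsScalar p ε b * cnsEta p ε := by
    rw [hdec, add_pow_char, mul_pow, ← map_pow, ← map_pow, ZMod.pow_card, ZMod.pow_card,
      cnsEta_pow_card hp heps, mul_neg, ← sub_eq_add_neg]
  have : x ^ (p + 1) = x ^ p * x := by rw [pow_succ]
  rw [this, hfrob]
  conv_lhs => rw [hdec]
  have hsq : cnsEta p ε * cnsEta p ε = cnsScalar p ε ε := cnsEta_sq
  have expand : (cnsScalar p ε a - cnsScalar p ε b * cnsEta p ε)
      * (cnsScalar p ε a + cnsScalar p ε b * cnsEta p ε)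
      = cnsScalar p ε a * cnsScalar p ε a
        - cnsScalar p ε b * cnsScalar p ε b * (cnsEta p ε * cnsEta p ε) := by ring
  rw [expand, hsq, ← _root_.map_mul, ← _root_.map_mul, ← _root_.map_mul, ← _root_.map_sub]
  rw [cns_det x.2, ← ha, ← hb]
  congr 1
  ring

end Aux2
section Aux3

variable {p : ℕ} {ε : ZMod p}

/-- The equivalence between the Cartan subring and pairs. -/
def cnsEquivProd (p : ℕ) (ε : ZMod p) : CnsSubring p ε ≃ ZMod p × ZMod p where
  toFun x := ((x : Matrix (Fin 2) (Fin 2) (ZMod p)) 0 0, (x : Matrix (Fin 2) (Fin 2) (ZMod p)) 0 1)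
  invFun c := ⟨!![c.1, c.2; ε * c.2, c.1], ⟨by simp, by simp⟩⟩
  left_inv x := Subtype.ext (cns_eta x.2).symm
  right_inv c := by simp

lemma cns_card (p : ℕ) (ε : ZMod p) [NeZero p] : Nat.card (CnsSubring p ε) = p ^ 2 := by
  rw [Nat.card_congr (cnsEquivProd p ε), Nat.card_prod, Nat.card_zmod]
  ring

/-- The group homomorphism from the Cartan special linear group to the units of the
Cartan subring. -/
def cnsToUnits (p : ℕ) (ε : ZMod p) : CnsSL p ε →* (CnsSubring p ε)ˣ where
  toFun g :=
    { val := ⟨(g : Matrix.SpecialLinearGroup (Fin 2) (ZMod p)), g.2⟩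
      inv := ⟨((g : Matrix.SpecialLinearGroup (Fin 2) (ZMod p))⁻¹ :
          Matrix.SpecialLinearGroup (Fin 2) (ZMod p)), (g⁻¹ : CnsSL p ε).2⟩
      val_inv := Subtype.ext (by
        show ((g : Matrix.SpecialLinearGroup (Fin 2) (ZMod p)) :
            Matrix (Fin 2) (Fin 2) (ZMod p)) * _ = 1
        rw [← Matrix.SpecialLinearGroup.coe_mul, mul_inv_cancel,
          Matrix.SpecialLinearGroup.coe_one])
      inv_val := Subtype.ext (by
        show (((g : Matrix.SpecialLinearGroup (Fin 2) (ZMod p))⁻¹ :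
            Matrix.SpecialLinearGroup (Fin 2) (ZMod p)) : Matrix (Fin 2) (Fin 2) (ZMod p)) * _ = 1
        rw [← Matrix.SpecialLinearGroup.coe_mul, inv_mul_cancel,
          Matrix.SpecialLinearGroup.coe_one]) }
  map_one' := by
    apply Units.ext
    apply Subtype.ext
    rfl
  map_mul' g h := by
    apply Units.ext
    apply Subtype.ext
    simp

lemma cnsToUnits_injective (p : ℕ) (ε : ZMod p) : Function.Injective (cnsToUnits p ε) := by
  intro g h hgh
  have := congrArg (fun u : (CnsSubring p ε)ˣ => ((u : CnsSubring p ε) :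
    Matrix (Fin 2) (Fin 2) (ZMod p))) hgh
  exact Subtype.ext (Subtype.ext this)

lemma nonsquare_pow_card_div_two {p : ℕ} [Fact p.Prime] (hp : Odd p) {ε : ZMod p}
    (hε : ¬ IsSquare ε) : ε ^ (p / 2) = -1 := by
  have hε0 : ε ≠ 0 := fun h => hε ⟨0, by simp [h]⟩
  have hchar : ringChar (ZMod p) ≠ 2 := by
    rw [ZMod.ringChar_zmod_n]
    intro h
    rw [h] at hp
    simp [Nat.odd_iff] at hp
  rcases FiniteField.pow_dichotomy hchar hε0 with h | h
  · exfalso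
    apply hε
    rw [FiniteField.isSquare_iff hchar hε0]
    exact h
  · rwa [ZMod.card] at h

end Aux3
section Aux4

variable {p : ℕ} {ε : ZMod p}

lemma redSL_coe_apply (γ : Matrix.SpecialLinearGroup (Fin 2) ℤ) (i j : Fin 2) :
    ((redSL p γ) : Matrix (Fin 2) (Fin 2) (ZMod p)) i j
      = ((γ : Matrix (Fin 2) (Fin 2) ℤ) i j : ZMod p) := rfl

lemma cns_lift [Fact p.Prime] (M : Matrix.SpecialLinearGroup (Fin 2) (ZMod p))
    (hM : M ∈ CnsSL p ε) : ∃ γ : Matrix.SpecialLinearGroup (Fin 2) ℤ, redSL p γ = M := by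
  have hM' : (M : Matrix (Fin 2) (Fin 2) (ZMod p)) ∈ CnsSet p ε := hM
  set a := (M : Matrix (Fin 2) (Fin 2) (ZMod p)) 0 0 with ha
  set b := (M : Matrix (Fin 2) (Fin 2) (ZMod p)) 0 1 with hbdef
  have hdet : a ^ 2 - ε * b ^ 2 = 1 := by
    rw [ha, hbdef, ← cns_det hM']
    exact M.2
  have hM11 : (M : Matrix (Fin 2) (Fin 2) (ZMod p)) 1 1 = a := hM'.1.symm
  have hM10 : (M : Matrix (Fin 2) (Fin 2) (ZMod p)) 1 0 = ε * b := hM'.2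
  by_cases hb : b = 0
  · -- then a = 1 or a = -1 and M = ±1 lifts trivially
    rw [hb] at hdet
    have h2 : (a - 1) * (a + 1) = 0 := by linear_combination hdet
    rcases mul_eq_zero.mp h2 with h | h
    · have ha1 : a = 1 := by linear_combination h
      refine ⟨1, ?_⟩
      apply Subtype.ext
      ext i j
      rw [redSL_coe_apply]
      fin_cases i <;> fin_cases j <;>
        simp [← ha, ← hbdef, ha1, hb, hM10, hM11, Matrix.one_apply]
    · have ha1 : a = -1 := by linear_combination h
      refine ⟨⟨!![-1, 0; 0, -1], by simp [Matrix.det_fin_two_of]⟩, ?_⟩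
      apply Subtype.ext
      ext i j
      erw [redSL_coe_apply]
      fin_cases i <;> fin_cases j <;>
        simp [← ha, ← hbdef, ha1, hb, hM10, hM11]
  · -- main case : b ≠ 0
    set a0 : ℤ := (a.val : ℤ) with ha0
    set b0 : ℤ := (b.val : ℤ) with hb0def
    have hcastb : ((b0 : ℤ) : ZMod p) = b := by
      rw [hb0def]
      push_cast
      simp [ZMod.natCast_val, ZMod.cast_id]
    have hcasta : ((a0 : ℤ) : ZMod p) = a := by
      rw [ha0]
      push_cast
      simp [ZMod.natCast_val, ZMod.cast_id]
    have hndvd : ¬ ((p : ℤ) ∣ b0) := by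
      rw [← ZMod.intCast_zmod_eq_zero_iff_dvd, hcastb]
      exact hb
    have hcop : IsCoprime (p : ℤ) b0 := by
      rw [Int.isCoprime_iff_nat_coprime]
      simp only [Int.natAbs_natCast]
      exact (Fact.out : p.Prime).coprime_iff_not_dvd.mpr
        (fun h => hndvd (Int.natAbs_dvd_natAbs.mp (by simpa using h)))
    obtain ⟨u, v, huv⟩ := hcop
    have hv : ((v : ℤ) : ZMod p) * b = 1 := by
      have := congrArg (fun z : ℤ => (z : ZMod p)) huv
      push_cast at this
      rw [hcastb] at this
      simpa [ZMod.natCast_self] using this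
    set A : ℤ := 1 + (a0 - 1) * (v * b0) with hAdef
    have hcastA : ((A : ℤ) : ZMod p) = a := by
      rw [hAdef]
      push_cast
      rw [hcastb, hcasta, hv]
      ring
    have hcop2 : IsCoprime A b0 := ⟨1, -((a0 - 1) * v), by rw [hAdef]; ring⟩
    obtain ⟨D0, C0', hDC⟩ := hcop2
    set C0 : ℤ := -C0' with hC0def
    have hABC : A * D0 - b0 * C0 = 1 := by rw [hC0def]; linear_combination hDC
    set shat : ZMod p := b⁻¹ * (a - ((D0 : ℤ) : ZMod p)) with hshat
    set s : ℤ := (shat.val : ℤ) with hsdef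
    have hcasts : ((s : ℤ) : ZMod p) = shat := by
      rw [hsdef]
      push_cast
      simp [ZMod.natCast_val, ZMod.cast_id]
    have hrel : a * ((D0 : ℤ) : ZMod p) - b * ((C0 : ℤ) : ZMod p) = 1 := by
      have := congrArg (fun z : ℤ => (z : ZMod p)) hABC
      push_cast at this
      rwa [hcastA, hcastb] at this
    refine ⟨⟨!![A, b0; C0 + A * s, D0 + b0 * s], by
      rw [Matrix.det_fin_two_of]; linear_combination hABC⟩, ?_⟩
    apply Subtype.ext
    ext i j
    erw [redSL_coe_apply]
    fin_cases i <;> fin_cases j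
    · simpa using hcastA
    · simpa using hcastb
    · -- entry (1,0)
      show ((C0 + A * s : ℤ) : ZMod p) = (M : Matrix (Fin 2) (Fin 2) (ZMod p)) 1 0
      rw [hM10]
      push_cast
      rw [hcastA, hcasts, hshat]
      apply mul_left_cancel₀ hb
      have hbb : b * b⁻¹ = 1 := mul_inv_cancel₀ hb
      calc b * ((C0 : ZMod p) + a * (b⁻¹ * (a - (D0 : ZMod p))))
          = b * (C0 : ZMod p) + (b * b⁻¹) * (a * (a - (D0 : ZMod p))) := by ring
        _ = b * (ε * b) := by rw [hbb]; linear_combination hdet - hrel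
    · -- entry (1,1)
      show ((D0 + b0 * s : ℤ) : ZMod p) = (M : Matrix (Fin 2) (Fin 2) (ZMod p)) 1 1
      rw [hM11]
      push_cast
      rw [hcastb, hcasts, hshat, ← mul_assoc, mul_inv_cancel₀ hb, one_mul]
      ring

end Aux4
/-- `Γ(p)` is normal in `Γ_ns^ε(p)` and the quotient is cyclic of order `p + 1`,
i.e. isomorphic to `ℤ/(p+1)ℤ`. -/
theorem gammaNs_quotient_cyclic (p : ℕ) [Fact p.Prime] (hp : Odd p)
    (ε : ZMod p) (hε : ¬ IsSquare ε) :
    ((CongruenceSubgroup.Gamma p).subgroupOf (GammaNs p ε)).Normal ∧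
    IsCyclic (GammaNs p ε ⧸ (CongruenceSubgroup.Gamma p).subgroupOf (GammaNs p ε)) ∧
    Nat.card (GammaNs p ε ⧸ (CongruenceSubgroup.Gamma p).subgroupOf (GammaNs p ε))
      = p + 1 ∧
    Nonempty ((GammaNs p ε ⧸ (CongruenceSubgroup.Gamma p).subgroupOf (GammaNs p ε))
      ≃* Multiplicative (ZMod (p + 1))) := by
  classical
  haveI : NeZero p := ⟨(Fact.out : p.Prime).ne_zero⟩
  haveI : NoZeroDivisors (CnsSubring p ε) := cns_noZeroDivisors hε
  haveI : Nontrivial (CnsSubring p ε) := ⟨⟨0, 1, fun h => by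
    have := congrArg
      (fun y : CnsSubring p ε => (y : Matrix (Fin 2) (Fin 2) (ZMod p)) 0 0) h
    simp [Matrix.one_apply] at this⟩⟩
  haveI : IsDomain (CnsSubring p ε) := NoZeroDivisors.to_isDomain _
  letI : Fintype (CnsSubring p ε) := Fintype.ofFinite _
  letI : Field (CnsSubring p ε) := Fintype.fieldOfDomain _
  have heps : ε ^ (p / 2) = -1 := nonsquare_pow_card_div_two hp hε
  -- every element of the Cartan SL group gives a `(p+1)`-st root of unity
  have hpow : ∀ g : CnsSL p ε, (cnsToUnits p ε g) ^ (p + 1) = 1 := by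
    intro g
    apply Units.ext
    rw [Units.val_pow_eq_pow_val, Units.val_one]
    rw [cns_pow_card_add_one hp heps]
    have hdet1 : ((cnsToUnits p ε g : CnsSubring p ε) :
        Matrix (Fin 2) (Fin 2) (ZMod p)).det = 1 :=
      (g : Matrix.SpecialLinearGroup (Fin 2) (ZMod p)).2
    rw [hdet1, _root_.map_one]
  let w : CnsSL p ε →* rootsOfUnity (p + 1) (CnsSubring p ε) :=
    (cnsToUnits p ε).codRestrict _ (fun g => (mem_rootsOfUnity _ _).mpr (hpow g))
  have hinj : Function.Injective w := by
    intro g h hgh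
    exact cnsToUnits_injective p ε (Subtype.ext_iff.mp hgh)
  have hsurj : Function.Surjective w := by
    intro x
    have hy : ((x : (CnsSubring p ε)ˣ) : CnsSubring p ε) ^ (p + 1) = 1 := by
      have h1 := (mem_rootsOfUnity _ _).mp x.2
      have := congrArg (Units.val) h1
      rwa [Units.val_pow_eq_pow_val, Units.val_one] at this
    have hdet : (((x : (CnsSubring p ε)ˣ) : CnsSubring p ε) :
        Matrix (Fin 2) (Fin 2) (ZMod p)).det = 1 := by
      apply cnsScalar_injective (p := p) (ε := ε)
      rw [← cns_pow_card_add_one hp heps, hy, _root_.map_one]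
    refine ⟨⟨⟨((x : (CnsSubring p ε)ˣ) : CnsSubring p ε), hdet⟩,
      ((x : (CnsSubring p ε)ˣ) : CnsSubring p ε).2⟩, ?_⟩
    apply Subtype.ext
    apply Units.ext
    rfl
  let e1 : CnsSL p ε ≃* rootsOfUnity (p + 1) (CnsSubring p ε) :=
    MulEquiv.ofBijective w ⟨hinj, hsurj⟩
  -- cardinality computations
  have hp1 : 1 < p := (Fact.out : p.Prime).one_lt
  have hcardD : Fintype.card (CnsSubring p ε) = p ^ 2 := by
    rw [← Nat.card_eq_fintype_card, cns_card]
  have hcardU : Fintype.card (CnsSubring p ε)ˣ = p ^ 2 - 1 := by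
    rw [Fintype.card_units, hcardD]
  obtain ⟨g, hg⟩ := IsCyclic.exists_generator (α := (CnsSubring p ε)ˣ)
  have hord : orderOf g = p ^ 2 - 1 := by
    rw [orderOf_eq_card_of_forall_mem_zpowers hg]
    simp only [Nat.card_eq_fintype_card]
    exact hcardU
  have hprim : IsPrimitiveRoot ((g : CnsSubring p ε)) (p ^ 2 - 1) := by
    have h := IsPrimitiveRoot.orderOf (g : CnsSubring p ε)
    rwa [orderOf_units, hord] at h
  have hpos : 0 < p ^ 2 - 1 := by
    have h1 : 1 < p ^ 2 := Nat.one_lt_pow (by norm_num) hp1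
    omega
  have hsplit : p ^ 2 - 1 = (p - 1) * (p + 1) := by
    have h2 : (p - 1) * (p + 1) + 1 = p ^ 2 := by
      obtain ⟨q, rfl⟩ := Nat.exists_eq_add_of_le hp1.le
      simp only [Nat.add_sub_cancel_left]
      ring
    rw [← h2, Nat.add_sub_cancel]
  haveI : NeZero (p + 1) := ⟨p.succ_ne_zero⟩
  have hprim2 : IsPrimitiveRoot ((g : CnsSubring p ε) ^ (p - 1)) (p + 1) :=
    hprim.pow hpos hsplit
  have hroots : Fintype.card (rootsOfUnity (p + 1) (CnsSubring p ε)) = p + 1 :=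
    by rw [← Nat.card_eq_fintype_card]; exact hprim2.card_rootsOfUnity
  have hcardroots : Nat.card (rootsOfUnity (p + 1) (CnsSubring p ε)) = p + 1 := by
    rw [Nat.card_eq_fintype_card]
    exact hroots
  have hcardG : Nat.card (CnsSL p ε) = p + 1 := by
    rw [Nat.card_congr e1.toEquiv]
    exact hcardroots
  have hcycG : IsCyclic (CnsSL p ε) :=
    isCyclic_of_subgroup_isDomain (R := CnsSubring p ε)
      ((Units.coeHom (CnsSubring p ε)).comp (cnsToUnits p ε))
      (Units.val_injective.comp (cnsToUnits_injective p ε))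
  -- the reduction homomorphism
  let f : GammaNs p ε →* CnsSL p ε :=
    ((redSL p).comp (GammaNs p ε).subtype).codRestrict _ (fun γ => γ.2)
  have hkerf : f.ker = (CongruenceSubgroup.Gamma p).subgroupOf (GammaNs p ε) := by
    ext γ
    simp only [MonoidHom.mem_ker, Subgroup.mem_subgroupOf]
    rw [CongruenceSubgroup.Gamma_mem']
    exact ⟨fun h => congrArg Subtype.val h, fun h => Subtype.ext h⟩
  have hfsur : Function.Surjective f := by
    intro g
    obtain ⟨γ, hγ⟩ := cns_lift (g : Matrix.SpecialLinearGroup (Fin 2) (ZMod p)) g.2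
    have hmem : γ ∈ GammaNs p ε := by
      have : redSL p γ ∈ CnsSL p ε := by rw [hγ]; exact g.2
      exact this
    exact ⟨⟨γ, hmem⟩, Subtype.ext hγ⟩
  let e2 : (GammaNs p ε ⧸ (CongruenceSubgroup.Gamma p).subgroupOf (GammaNs p ε)) ≃* CnsSL p ε :=
    (QuotientGroup.quotientMulEquivOfEq hkerf.symm).trans
      (QuotientGroup.quotientKerEquivOfSurjective f hfsur)
  have hcycQ : IsCyclic
      (GammaNs p ε ⧸ (CongruenceSubgroup.Gamma p).subgroupOf (GammaNs p ε)) :=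
    isCyclic_of_surjective e2.symm e2.symm.surjective
  have hcardQ : Nat.card
      (GammaNs p ε ⧸ (CongruenceSubgroup.Gamma p).subgroupOf (GammaNs p ε)) = p + 1 := by
    rw [Nat.card_congr e2.toEquiv]
    exact hcardG
  exact ⟨gammaSubgroupOf_normal p ε, hcycQ, hcardQ,
    ⟨hcardQ ▸ (zmodCyclicMulEquiv hcycQ).symm⟩⟩
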